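/- The Schur polynomials s_λ(x_1,...,x_N) are eigenfunctions of the operator D_2 = (1/2)∑_i x_i²∂²/∂x_i² + ∑_{i≠j} x_i²/(x_i-x_j)·∂/∂x_i, with eigenvalue ∑_{(i,j)∈λ}(j-i) + |λ|·(N-1); that is, D_2·s_λ = (p_1(A_λ) + |λ|(N-1))·s_λ, where p_1(A_λ) = ∑_{(i,j)∈λ}(j-i) is the sum of contents of λ. -/

import Mathlib

open Finset MvPolynomial

theorem mono_eigen (N : ℕ) (m : Fin N →₀ ℕ) (i : Fin N) :
    (X i : MvPolynomial (Fin N) ℚ)^2 * pderiv i (pderiv i (monomial m 1)) =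
      C ((m i : ℚ) * ((m i : ℚ) - 1)) * monomial m 1 := by
  rw [pderiv_monomial, pderiv_monomial]
  have hsub : ((m - Finsupp.single i 1 : Fin N →₀ ℕ)) i = m i - 1 := by
    simp [Finsupp.tsub_apply]
  rcases Nat.lt_or_ge (m i) 2 with h | h
  · -- coefficient is zero
    interval_cases hmi : m i
    · simp [hmi, hsub]
    · simp [hmi, hsub]
  · have h1 : (1 : ℕ) ≤ m i := by omega
    rw [hsub]
    have hexp : m - Finsupp.single i 1 - Finsupp.single i 1 + Finsupp.single i 2 = m := by
      ext j
      rcases eq_or_ne j i with rfl | hji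
      · simp [Finsupp.tsub_apply]; omega
      · simp [Finsupp.tsub_apply, Finsupp.single_apply, hji.symm, Ne.symm hji]
    calc (X i : MvPolynomial (Fin N) ℚ)^2 * monomial (m - Finsupp.single i 1 - Finsupp.single i 1) (1 * (m i : ℚ) * ((m i - 1 : ℕ) : ℚ))
        = monomial (Finsupp.single i 2) 1 * monomial (m - Finsupp.single i 1 - Finsupp.single i 1) (1 * (m i : ℚ) * ((m i - 1 : ℕ) : ℚ)) := by
          rw [X_pow_eq_monomial]
      _ = monomial m ((m i : ℚ) * ((m i : ℚ) - 1)) := by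
          rw [monomial_mul]
          rw [add_comm] at hexp
          rw [hexp]
          congr 1
          push_cast [Nat.cast_sub h1]
          ring
      _ = C ((m i : ℚ) * ((m i : ℚ) - 1)) * monomial m 1 := by
          rw [C_mul_monomial, mul_one]

theorem prod_pow_eq_mono (N : ℕ) (e : Fin N → ℕ) :
    ∏ i : Fin N, (X i : MvPolynomial (Fin N) ℚ) ^ e i =
      monomial (Finsupp.equivFunOnFinite.symm e) 1 := by
  rw [← prod_X_pow_eq_monomial]
  have : ∀ x : Fin N, (Finsupp.equivFunOnFinite.symm e) x = e x := fun x => rfl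
  simp_rw [this]
  exact (Finset.prod_subset (Finset.subset_univ _) (fun x _ hx => by
    rw [Finsupp.notMem_support_iff] at hx
    rw [this] at hx
    rw [hx, pow_zero])).symm

theorem det_eigen (N : ℕ) (l : Fin N → ℕ) :
    ∑ i : Fin N, (X i : MvPolynomial (Fin N) ℚ)^2 * pderiv i (pderiv i
        (Matrix.det (Matrix.of fun i j : Fin N => (X j : MvPolynomial (Fin N) ℚ) ^ l i))) =
      C (∑ i : Fin N, (l i : ℚ) * ((l i : ℚ) - 1)) *
        Matrix.det (Matrix.of fun i j : Fin N => (X j : MvPolynomial (Fin N) ℚ) ^ l i) := by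
  rw [Matrix.det_apply]
  simp_rw [map_sum, Finset.mul_sum]
  rw [Finset.sum_comm]
  refine Finset.sum_congr rfl fun σ _ => ?_
  have hmono : ∏ i : Fin N, (Matrix.of fun i j : Fin N => (X j : MvPolynomial (Fin N) ℚ) ^ l i) (σ i) i
      = monomial (Finsupp.equivFunOnFinite.symm fun i => l (σ i)) 1 := by
    rw [← prod_pow_eq_mono]
    rfl
  rw [hmono]
  have hsgn : ∀ p : MvPolynomial (Fin N) ℚ, Equiv.Perm.sign σ • p =
      C ((Equiv.Perm.sign σ : ℤ) : ℚ) * p := by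
    intro p
    rw [Units.smul_def, zsmul_eq_mul, ← map_intCast (C : ℚ →+* MvPolynomial (Fin N) ℚ)]
  simp_rw [hsgn, pderiv_C_mul]
  have key : ∀ i : Fin N, (X i : MvPolynomial (Fin N) ℚ)^2 *
      (C ((Equiv.Perm.sign σ : ℤ) : ℚ) * pderiv i (pderiv i
        (monomial (Finsupp.equivFunOnFinite.symm fun k => l (σ k)) 1))) =
      C ((l (σ i) : ℚ) * ((l (σ i) : ℚ) - 1)) * (C ((Equiv.Perm.sign σ : ℤ) : ℚ) *
        monomial (Finsupp.equivFunOnFinite.symm fun k => l (σ k)) 1) := by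
    intro i
    have := mono_eigen N (Finsupp.equivFunOnFinite.symm fun k => l (σ k)) i
    have happ : (Finsupp.equivFunOnFinite.symm fun k => l (σ k)) i = l (σ i) := rfl
    rw [happ] at this
    rw [mul_left_comm, this]
    ring
  rw [Finset.sum_congr rfl fun i _ => key i]
  rw [← Finset.sum_mul]
  congr 1
  rw [← map_sum, ← map_sum]
  exact congrArg C (Equiv.sum_comp σ (fun k => (l k : ℚ) * ((l k : ℚ) - 1)))

theorem prod_pairs {M : Type*} [CommMonoid M] (N : ℕ) (f : Fin N → Fin N → M) :
    ∏ p ∈ Finset.univ.filter (fun p : Fin N × Fin N => p.1 < p.2), f p.1 p.2 =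
      ∏ i : Fin N, ∏ j ∈ Finset.Ioi i, f i j := by
  rw [Finset.prod_sigma']
  refine Finset.prod_nbij' (fun p => ⟨p.1, p.2⟩) (fun p => (p.1, p.2)) ?_ ?_ ?_ ?_ ?_
  · intro p hp
    simp only [Finset.mem_filter, Finset.mem_univ, true_and] at hp
    simp [Finset.mem_Ioi, hp]
  · intro p hp
    simp only [Finset.mem_sigma, Finset.mem_univ, Finset.mem_Ioi, true_and] at hp
    simp [hp]
  · intro p _; rfl
  · intro p _; rfl
  · intro p _; rfl

theorem V_eq (N : ℕ) :
    ∏ p ∈ Finset.univ.filter (fun p : Fin N × Fin N => p.1 < p.2),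
        ((X p.1 : MvPolynomial (Fin N) ℚ) - X p.2) =
      C ((-1 : ℚ) ^ (Finset.univ.filter (fun p : Fin N × Fin N => p.1 < p.2)).card) *
        Matrix.det (Matrix.of fun i j : Fin N => (X j : MvPolynomial (Fin N) ℚ) ^ (i : ℕ)) := by
  have h1 : Matrix.det (Matrix.of fun i j : Fin N => (X j : MvPolynomial (Fin N) ℚ) ^ (i : ℕ))
      = Matrix.det (Matrix.vandermonde (fun i : Fin N => (X i : MvPolynomial (Fin N) ℚ))) := by
    rw [← Matrix.det_transpose]
    congr 1
  rw [h1, Matrix.det_vandermonde, ← prod_pairs N (fun i j => (X j : MvPolynomial (Fin N) ℚ) - X i)]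
  calc ∏ p ∈ Finset.univ.filter (fun p : Fin N × Fin N => p.1 < p.2),
        ((X p.1 : MvPolynomial (Fin N) ℚ) - X p.2)
      = ∏ p ∈ Finset.univ.filter (fun p : Fin N × Fin N => p.1 < p.2),
        ((-1 : MvPolynomial (Fin N) ℚ) * (X p.2 - X p.1)) :=
        Finset.prod_congr rfl (fun p _ => by ring)
    _ = (∏ _p ∈ Finset.univ.filter (fun p : Fin N × Fin N => p.1 < p.2),
          (-1 : MvPolynomial (Fin N) ℚ)) *
        ∏ p ∈ Finset.univ.filter (fun p : Fin N × Fin N => p.1 < p.2), (X p.2 - X p.1) :=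
        Finset.prod_mul_distrib
    _ = _ := by
        rw [Finset.prod_const]
        congr 1
        rw [map_pow, map_neg, map_one]

theorem V_eigen (N : ℕ) :
    ∑ i : Fin N, (X i : MvPolynomial (Fin N) ℚ)^2 * pderiv i (pderiv i
        (∏ p ∈ Finset.univ.filter (fun p : Fin N × Fin N => p.1 < p.2),
          ((X p.1 : MvPolynomial (Fin N) ℚ) - X p.2))) =
      C (∑ i : Fin N, ((i : ℕ) : ℚ) * (((i : ℕ) : ℚ) - 1)) *
        ∏ p ∈ Finset.univ.filter (fun p : Fin N × Fin N => p.1 < p.2),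
          ((X p.1 : MvPolynomial (Fin N) ℚ) - X p.2) := by
  have hD := det_eigen N (fun i => (i : ℕ))
  rw [V_eq]
  calc ∑ i : Fin N, (X i : MvPolynomial (Fin N) ℚ)^2 * pderiv i (pderiv i
        (C ((-1 : ℚ) ^ (Finset.univ.filter (fun p : Fin N × Fin N => p.1 < p.2)).card) *
          Matrix.det (Matrix.of fun i j : Fin N => (X j : MvPolynomial (Fin N) ℚ) ^ (i : ℕ))))
      = C ((-1 : ℚ) ^ (Finset.univ.filter (fun p : Fin N × Fin N => p.1 < p.2)).card) *
        ∑ i : Fin N, (X i : MvPolynomial (Fin N) ℚ)^2 * pderiv i (pderiv i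
          (Matrix.det (Matrix.of fun i j : Fin N => (X j : MvPolynomial (Fin N) ℚ) ^ (i : ℕ)))) := by
        rw [Finset.mul_sum]
        refine Finset.sum_congr rfl fun i _ => ?_
        rw [pderiv_C_mul, pderiv_C_mul]
        ring
    _ = _ := by
        rw [hD]
        ring

theorem pderiv_prod {α : Type*} [DecidableEq α] (N : ℕ) (k : Fin N)
    (s : Finset α) (f : α → MvPolynomial (Fin N) ℚ) :
    pderiv k (∏ p ∈ s, f p) = ∑ p ∈ s, pderiv k (f p) * ∏ q ∈ s.erase p, f q := by
  induction s using Finset.induction_on with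
  | empty => simp
  | insert a s ha ih =>
    rw [Finset.prod_insert ha, pderiv_mul, ih, Finset.sum_insert ha,
      Finset.erase_insert ha, Finset.mul_sum]
    congr 1
    refine Finset.sum_congr rfl fun p hp => ?_
    have hpa : p ≠ a := by rintro rfl; exact ha hp
    rw [Finset.erase_insert_of_ne hpa.symm, Finset.prod_insert
      (fun h => ha (Finset.mem_of_mem_erase h))]
    ring

theorem V_logderiv (N : ℕ) (x : Fin N → ℚ) (hx : Function.Injective x) (i : Fin N) :
    eval x (pderiv i (∏ p ∈ Finset.univ.filter (fun p : Fin N × Fin N => p.1 < p.2),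
        ((X p.1 : MvPolynomial (Fin N) ℚ) - X p.2))) =
      (∑ j ∈ Finset.univ.filter (fun j => j ≠ i), (x i - x j)⁻¹) *
        eval x (∏ p ∈ Finset.univ.filter (fun p : Fin N × Fin N => p.1 < p.2),
          ((X p.1 : MvPolynomial (Fin N) ℚ) - X p.2)) := by
  classical
  set S := Finset.univ.filter (fun p : Fin N × Fin N => p.1 < p.2) with hS
  set Vx : ℚ := eval x (∏ p ∈ S, ((X p.1 : MvPolynomial (Fin N) ℚ) - X p.2)) with hVx
  have hVx' : Vx = ∏ p ∈ S, (x p.1 - x p.2) := by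
    rw [hVx, map_prod]
    exact Finset.prod_congr rfl fun p _ => by simp
  have hne : ∀ p : Fin N × Fin N, p ∈ S → x p.1 - x p.2 ≠ 0 := by
    intro p hp
    have : p.1 < p.2 := (Finset.mem_filter.mp hp).2
    exact sub_ne_zero.mpr fun h => absurd (hx h) this.ne
  rw [pderiv_prod, map_sum]
  have hterm : ∀ p ∈ S,
      eval x (pderiv i ((X p.1 : MvPolynomial (Fin N) ℚ) - X p.2) * ∏ q ∈ S.erase p, (X q.1 - X q.2)) =
      (((if p.1 = i then (1:ℚ) else 0) - if p.2 = i then 1 else 0)) * ((x p.1 - x p.2)⁻¹ * Vx) := by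
    intro p hp
    rw [map_mul]
    congr 1
    · rw [map_sub, pderiv_X, pderiv_X, map_sub]
      simp [Pi.single_apply, apply_ite (eval x)]
    · rw [map_prod]
      have h1 : ∏ q ∈ S.erase p, eval x ((X q.1 : MvPolynomial (Fin N) ℚ) - X q.2) =
          ∏ q ∈ S.erase p, (x q.1 - x q.2) := Finset.prod_congr rfl fun q _ => by simp
      rw [h1, eq_comm, inv_mul_eq_div, div_eq_iff (hne p hp), hVx', mul_comm]
      exact (Finset.mul_prod_erase S (fun q => x q.1 - x q.2) hp).symm
  rw [Finset.sum_congr rfl hterm, Finset.sum_mul]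
  rw [← Finset.sum_filter_of_ne (p := fun p : Fin N × Fin N => p.1 = i ∨ p.2 = i)
    (fun p _ hne0 => by
      by_contra hP
      apply hne0
      rw [if_neg (fun h => hP (Or.inl h)), if_neg (fun h => hP (Or.inr h))]
      ring)]
  refine Finset.sum_nbij' (i := fun p : Fin N × Fin N => if p.1 = i then p.2 else p.1)
    (j := fun j : Fin N => if i < j then (i, j) else (j, i)) ?_ ?_ ?_ ?_ ?_
  · intro p hp
    simp only [Finset.mem_filter, Finset.mem_univ, true_and, hS] at hp ⊢
    obtain ⟨hlt, hor⟩ := hp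
    rcases hor with h | h
    · rw [if_pos h]
      intro hc
      rw [h, hc] at hlt
      exact lt_irrefl i hlt
    · have h1 : p.1 ≠ i := by
        intro hc
        rw [hc, h] at hlt
        exact lt_irrefl i hlt
      rw [if_neg h1]
      exact h1
  · intro j hj
    simp only [Finset.mem_filter, Finset.mem_univ, true_and, hS] at hj ⊢
    rcases lt_or_gt_of_ne (Ne.symm hj) with h | h
    · rw [if_pos h]
      exact ⟨h, Or.inl rfl⟩
    · rw [if_neg (not_lt_of_gt h)]
      exact ⟨h, Or.inr rfl⟩
  · intro p hp
    simp only [Finset.mem_filter, Finset.mem_univ, true_and, hS] at hp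
    obtain ⟨hlt, hor⟩ := hp
    rcases hor with h | h
    · rw [if_pos h, if_pos (show i < p.2 by rw [← h]; exact hlt)]
      rw [← h]
    · have h1 : p.1 ≠ i := by
        intro hc
        rw [hc, h] at hlt
        exact lt_irrefl i hlt
      rw [if_neg h1, if_neg (by rw [← h]; exact not_lt_of_gt hlt)]
      rw [← h]
  · intro j hj
    simp only [Finset.mem_filter, Finset.mem_univ, true_and, hS] at hj
    rcases lt_or_gt_of_ne (Ne.symm hj) with h | h
    · rw [if_pos h]
      simp
    · rw [if_neg (not_lt_of_gt h)]
      simp only [if_neg hj]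
  · intro p hp
    simp only [Finset.mem_filter, Finset.mem_univ, true_and, hS] at hp
    obtain ⟨hlt, hor⟩ := hp
    rcases hor with h | h
    · have h2 : p.2 ≠ i := by
        intro hc
        rw [h, hc] at hlt
        exact lt_irrefl i hlt
      rw [if_pos h, if_pos h, if_neg h2, h]
      ring
    · have h1 : p.1 ≠ i := by
        intro hc
        rw [hc, h] at hlt
        exact lt_irrefl i hlt
      rw [if_neg h1, if_neg h1, if_pos h, h]
      rw [show x p.1 - x i = -(x i - x p.1) by ring, inv_neg]
      ring

theorem gauss_q (L : ℕ) : ∑ j ∈ Finset.Icc 1 L, (j : ℚ) = L * (L + 1) / 2 := by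
  induction L with
  | zero => simp
  | succ n ih =>
    rw [Finset.sum_Icc_succ_top (by omega), ih]
    push_cast
    ring

theorem eig_arith (N : ℕ) (lam : Fin N → ℕ) :
    (∑ i : Fin N, ∑ j ∈ Finset.Icc 1 (lam i), ((j : ℚ) - ((i : ℚ) + 1))) +
        (∑ i : Fin N, (lam i : ℚ)) * ((N : ℚ) - 1) =
      ((∑ i : Fin N, ((lam i + (N - 1 - (i : ℕ)) : ℕ) : ℚ) *
          (((lam i + (N - 1 - (i : ℕ)) : ℕ) : ℚ) - 1)) -
        ∑ i : Fin N, ((i : ℕ) : ℚ) * (((i : ℕ) : ℚ) - 1)) / 2 := by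
  have hrev : ∑ i : Fin N, ((i : ℕ) : ℚ) * (((i : ℕ) : ℚ) - 1) =
      ∑ i : Fin N, ((N - 1 - (i : ℕ) : ℕ) : ℚ) * (((N - 1 - (i : ℕ) : ℕ) : ℚ) - 1) := by
    rw [← Equiv.sum_comp Fin.revPerm (fun i : Fin N => ((i : ℕ) : ℚ) * (((i : ℕ) : ℚ) - 1))]
    refine Finset.sum_congr rfl fun i _ => ?_
    have : ((Fin.revPerm i : Fin N) : ℕ) = N - 1 - (i : ℕ) := by
      simp [Fin.revPerm, Fin.rev]
      omega
    rw [this]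
  rw [hrev, ← Finset.sum_sub_distrib, Finset.sum_mul, ← Finset.sum_add_distrib,
    Finset.sum_div]
  refine Finset.sum_congr rfl fun i _ => ?_
  have hk : ((N - 1 - (i : ℕ) : ℕ) : ℚ) = (N : ℚ) - 1 - ((i : ℕ) : ℚ) := by
    have h1 : (N - 1 - (i : ℕ)) + (i : ℕ) + 1 = N := by omega
    have := congrArg (fun n : ℕ => (n : ℚ)) h1
    push_cast at this
    linarith
  have hinner : ∑ j ∈ Finset.Icc 1 (lam i), ((j : ℚ) - ((i : ℚ) + 1)) =
      (lam i : ℚ) * ((lam i : ℚ) + 1) / 2 - (lam i : ℚ) * ((i : ℚ) + 1) := by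
    rw [Finset.sum_sub_distrib, gauss_q, Finset.sum_const, Nat.card_Icc]
    simp
    ring
  rw [hinner]
  push_cast
  rw [hk]
  ring

/-- The Schur polynomials (characterized by the bialternant formula) are
eigenfunctions of `D₂ = (1/2)∑ xᵢ²∂²/∂xᵢ² + ∑_{i≠j} xᵢ²/(xᵢ-xⱼ) ∂/∂xᵢ` with
eigenvalue `p₁(A_λ) + |λ|(N-1)`, where `p₁(A_λ) = ∑_{(i,j)∈λ}(j-i)` is the sum
of contents of `λ` (rows 0-indexed: the content of the cell in row `i`, column
`j` is `j-(i+1)`).  Stated pointwise at every tuple of pairwise distinct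
rational numbers. -/
theorem D2_eigenvalue_schur (N : ℕ) (s : (Fin N → ℕ) → MvPolynomial (Fin N) ℚ)
    (hs : ∀ μ : Fin N → ℕ, Antitone μ →
      s μ * ∏ p ∈ Finset.univ.filter (fun p : Fin N × Fin N => p.1 < p.2),
          (X p.1 - X p.2) =
        Matrix.det (Matrix.of fun i j : Fin N => (X j : MvPolynomial (Fin N) ℚ) ^
          (μ i + (N - 1 - (i : ℕ)))))
    (lam : Fin N → ℕ) (hlam : Antitone lam)
    (x : Fin N → ℚ) (hx : Function.Injective x) :
    (1 / 2) * ∑ i : Fin N, x i ^ 2 *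
          MvPolynomial.eval x (MvPolynomial.pderiv i (MvPolynomial.pderiv i (s lam))) +
        ∑ i : Fin N, ∑ j ∈ Finset.univ.filter (fun j => j ≠ i),
          x i ^ 2 / (x i - x j) * MvPolynomial.eval x (MvPolynomial.pderiv i (s lam)) =
      ((∑ i : Fin N, ∑ j ∈ Finset.Icc 1 (lam i), ((j : ℚ) - ((i : ℚ) + 1))) +
          (∑ i : Fin N, (lam i : ℚ)) * ((N : ℚ) - 1)) *
        MvPolynomial.eval x (s lam) := by
  classical
  set V : MvPolynomial (Fin N) ℚ :=
    ∏ p ∈ Finset.univ.filter (fun p : Fin N × Fin N => p.1 < p.2), (X p.1 - X p.2) with hVdef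
  set P : MvPolynomial (Fin N) ℚ := s lam with hPdef
  have H : P * V = Matrix.det (Matrix.of fun i j : Fin N => (X j : MvPolynomial (Fin N) ℚ) ^
      (lam i + (N - 1 - (i : ℕ)))) := hs lam hlam
  -- scalar abbreviations
  set v : ℚ := eval x V with hvdef
  set pt : ℚ := eval x P with hptdef
  set r : Fin N → ℚ := fun i => ∑ j ∈ Finset.univ.filter (fun j => j ≠ i), (x i - x j)⁻¹
    with hrdef
  set ca : ℚ := ∑ i : Fin N, ((lam i + (N - 1 - (i : ℕ)) : ℕ) : ℚ) *
      (((lam i + (N - 1 - (i : ℕ)) : ℕ) : ℚ) - 1) with hcadef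
  set cv : ℚ := ∑ i : Fin N, ((i : ℕ) : ℚ) * (((i : ℕ) : ℚ) - 1) with hcvdef
  -- nonvanishing of the Vandermonde
  have hV0 : v ≠ 0 := by
    rw [hvdef, hVdef, map_prod]
    refine Finset.prod_ne_zero_iff.mpr fun p hp => ?_
    have hlt : p.1 < p.2 := (Finset.mem_filter.mp hp).2
    simp only [map_sub, eval_X]
    exact sub_ne_zero.mpr fun h => absurd (hx h) hlt.ne
  -- eigen equation for the determinant, rewritten through P * V
  have EA : ∑ i : Fin N, (X i : MvPolynomial (Fin N) ℚ)^2 * pderiv i (pderiv i (P * V)) =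
      C ca * (P * V) := by
    rw [H, hcadef]
    exact det_eigen N (fun i => lam i + (N - 1 - (i : ℕ)))
  -- Leibniz
  have hLeib : ∀ i : Fin N, pderiv i (pderiv i (P * V)) =
      pderiv i (pderiv i P) * V + 2 * (pderiv i P * pderiv i V) + P * pderiv i (pderiv i V) := by
    intro i
    rw [pderiv_mul, map_add, pderiv_mul, pderiv_mul]
    ring
  -- evaluated versions
  have hlog : ∀ i : Fin N, eval x (pderiv i V) = r i * v := fun i => V_logderiv N x hx i
  have e3 : ∑ i : Fin N, x i ^ 2 * eval x (pderiv i (pderiv i V)) = cv * v := by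
    have h := congrArg (eval x) (V_eigen N)
    rw [map_sum] at h
    simp only [map_mul, map_pow, eval_X, eval_C] at h
    exact h
  have e1 : ∑ i : Fin N, x i ^ 2 * eval x (pderiv i (pderiv i (P * V))) = ca * (pt * v) := by
    have h := congrArg (eval x) EA
    rw [map_sum] at h
    simp only [map_mul, map_pow, eval_X, eval_C] at h
    exact h
  have e2 : ∀ i : Fin N, eval x (pderiv i (pderiv i (P * V))) =
      eval x (pderiv i (pderiv i P)) * v + 2 * (eval x (pderiv i P) * (r i * v)) +
        pt * eval x (pderiv i (pderiv i V)) := by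
    intro i
    have h := congrArg (eval x) (hLeib i)
    simp only [map_add, map_mul, map_ofNat] at h
    rw [h, hlog i]
  -- combine into scalar identity
  set A1 : ℚ := ∑ i : Fin N, x i ^ 2 * eval x (pderiv i (pderiv i P)) with hA1def
  set B : ℚ := ∑ i : Fin N, x i ^ 2 * (eval x (pderiv i P) * r i) with hBdef
  have e4 : (A1 + 2 * B + cv * pt) * v = (ca * pt) * v := by
    have expand : ∑ i : Fin N, x i ^ 2 * eval x (pderiv i (pderiv i (P * V))) =
        A1 * v + (2 * v) * B + pt * (cv * v) := by
      calc ∑ i : Fin N, x i ^ 2 * eval x (pderiv i (pderiv i (P * V)))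
          = ∑ i : Fin N, ((x i ^ 2 * eval x (pderiv i (pderiv i P))) * v +
              (2 * v) * (x i ^ 2 * (eval x (pderiv i P) * r i)) +
              pt * (x i ^ 2 * eval x (pderiv i (pderiv i V)))) := by
            refine Finset.sum_congr rfl fun i _ => ?_
            rw [e2 i]
            ring
        _ = A1 * v + (2 * v) * B + pt * (cv * v) := by
            rw [Finset.sum_add_distrib, Finset.sum_add_distrib, ← Finset.sum_mul,
              ← Finset.mul_sum, ← Finset.mul_sum, hA1def, hBdef, e3]
    rw [expand] at e1
    linear_combination e1
  have key : A1 + 2 * B + cv * pt = ca * pt := mul_right_cancel₀ hV0 e4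
  -- rewrite the goal
  have hgoal2 : ∑ i : Fin N, ∑ j ∈ Finset.univ.filter (fun j => j ≠ i),
      x i ^ 2 / (x i - x j) * eval x (pderiv i P) = B := by
    rw [hBdef]
    refine Finset.sum_congr rfl fun i _ => ?_
    calc ∑ j ∈ Finset.univ.filter (fun j => j ≠ i), x i ^ 2 / (x i - x j) * eval x (pderiv i P)
        = ∑ j ∈ Finset.univ.filter (fun j => j ≠ i), (x i - x j)⁻¹ *
            (x i ^ 2 * eval x (pderiv i P)) := by
          refine Finset.sum_congr rfl fun j _ => ?_
          rw [div_eq_mul_inv]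
          ring
      _ = r i * (x i ^ 2 * eval x (pderiv i P)) := by rw [hrdef, ← Finset.sum_mul]
      _ = x i ^ 2 * (eval x (pderiv i P) * r i) := by ring
  rw [hgoal2, eig_arith N lam, ← hcadef, ← hcvdef]
  linarith [key]
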